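/- Let A be a finite abelian group (written additively), H a subgroup of A, χ a character of H, and u ∈ A. Let k be the smallest positive integer such that k·u ∈ H and χ(k·u) = 1, and let k₀ be the smallest positive integer such that k₀·u ∈ H. Then the number of characters ψ of A whose restriction to H equals χ and which satisfy ψ(u) ≠ 1 is [A:H]·(k−1)/k if k₀ = k, and [A:H] if k₀ < k. -/

import Mathlib

open AddChar Function

private lemma annih_bij {G : Type*} [AddCommGroup G] (N : AddSubgroup G) :
    Function.Bijective (fun θ : AddChar (G ⧸ N) ℂ =>
      (⟨θ.compAddMonoidHom (QuotientAddGroup.mk' N), fun x => by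
          simp [(QuotientAddGroup.eq_zero_iff _).mpr x.2]⟩ :
        {ψ : AddChar G ℂ // ∀ x : N, ψ x = 1})) := by
  constructor
  · intro a b hab
    exact compAddMonoidHom_injective_left _ (QuotientAddGroup.mk'_surjective N)
      (congrArg Subtype.val hab)
  · rintro ⟨ψ, hψ⟩
    let f' : G →+ Additive ℂˣ := AddMonoidHom.mk'
      (fun g => Additive.ofMul (ψ.toMonoidHom.toHomUnits (Multiplicative.ofAdd g)))
      (fun a b => by simp [← ofMul_mul, ← map_mul])
    have hf' : N ≤ f'.ker := by
      intro x hx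
      rw [AddMonoidHom.mem_ker]
      have : ((ψ.toMonoidHom.toHomUnits (Multiplicative.ofAdd x) : ℂˣ) : ℂ) = 1 := by
        rw [MonoidHom.coe_toHomUnits]; exact hψ ⟨x, hx⟩
      have h2 : ψ.toMonoidHom.toHomUnits (Multiplicative.ofAdd x) = 1 := Units.ext this
      simp only [f', AddMonoidHom.mk'_apply, h2]; rfl
    let lift := QuotientAddGroup.lift N f' hf'
    refine ⟨toAddMonoidHomEquiv.symm ((MonoidHom.toAdditive (Units.coeHom ℂ)).comp lift), ?_⟩
    ext a
    simp only [compAddMonoidHom_apply, QuotientAddGroup.mk'_apply,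
      toAddMonoidHomEquiv_symm_apply, AddMonoidHom.coe_comp, comp_apply]
    show ((MonoidHom.toAdditive (Units.coeHom ℂ)) (lift (QuotientAddGroup.mk a))).toMul = ψ a
    rw [show lift (QuotientAddGroup.mk a) = f' a from rfl]
    simp [f', MonoidHom.coe_toHomUnits]

private lemma card_annih {G : Type*} [AddCommGroup G] [Finite G] (N : AddSubgroup G) :
    Nat.card {ψ : AddChar G ℂ // ∀ x : N, ψ x = 1} = N.index := by
  rw [← Nat.card_congr (Equiv.ofBijective _ (annih_bij N))]
  have : Fintype (G ⧸ N) := Fintype.ofFinite _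
  rw [Nat.card_eq_fintype_card, AddChar.card_eq, ← Nat.card_eq_fintype_card]
  rfl

private lemma natcard_addChar {G : Type*} [AddCommGroup G] [Finite G] :
    Nat.card (AddChar G ℂ) = Nat.card G := by
  have : Fintype G := Fintype.ofFinite _
  rw [Nat.card_eq_fintype_card, AddChar.card_eq, ← Nat.card_eq_fintype_card]

private lemma card_eval_one {G : Type*} [AddCommGroup G] [Finite G] (q : G) :
    Nat.card {θ : AddChar G ℂ // θ q = 1} = Nat.card G / addOrderOf q := by
  have h1 : Nat.card {θ : AddChar G ℂ // θ q = 1}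
      = Nat.card {θ : AddChar G ℂ // ∀ x : AddSubgroup.zmultiples q, θ x = 1} := by
    apply Nat.card_congr (Equiv.subtypeEquivRight _)
    intro θ; constructor
    · rintro h ⟨x, hx⟩
      obtain ⟨n, rfl⟩ := AddSubgroup.mem_zmultiples_iff.mp hx
      simp [AddChar.map_zsmul_eq_zpow, h]
    · intro h; exact h ⟨q, AddSubgroup.mem_zmultiples q⟩
  have h2 : Nat.card (AddSubgroup.zmultiples q) * (AddSubgroup.zmultiples q).index
      = Nat.card G := AddSubgroup.card_mul_index _
  rw [Nat.card_zmultiples] at h2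
  have hpos : 0 < addOrderOf q := addOrderOf_pos q
  rw [h1, card_annih, ← h2, Nat.mul_div_cancel_left _ hpos]

private lemma exists_eval_eq {G : Type*} [AddCommGroup G] [Finite G] (q : G) {c : ℂ}
    (hc : c ^ addOrderOf q = 1) : ∃ θ : AddChar G ℂ, θ q = c := by
  classical
  have : Fintype G := Fintype.ofFinite _
  set n := addOrderOf q with hn
  have hnpos : 0 < n := addOrderOf_pos q
  -- every character value at q is an n-th root of unity
  have hroot : ∀ θ : AddChar G ℂ, (θ q) ^ n = 1 := fun θ => by
    rw [← AddChar.map_nsmul_eq_pow, hn, addOrderOf_nsmul_eq_zero, AddChar.map_zero_eq_one]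
  set T : Finset ℂ := Finset.image (fun θ : AddChar G ℂ => θ q) Finset.univ with hT
  -- each fiber of evaluation over T has size Nat.card G / n
  have hfiber : ∀ t ∈ T, (Finset.univ.filter (fun θ : AddChar G ℂ => θ q = t)).card
      = Nat.card G / n := by
    intro t ht
    obtain ⟨θt, -, hθt⟩ := Finset.mem_image.mp ht
    have htne : t ≠ 0 := hθt ▸ (θt.val_isUnit q).ne_zero
    have : (Finset.univ.filter (fun θ : AddChar G ℂ => θ q = t)).card
        = (Finset.univ.filter (fun θ : AddChar G ℂ => θ q = 1)).card := by
      apply Finset.card_nbij' (i := fun θ => θt⁻¹ * θ) (j := fun θ => θt * θ)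
      · intro θ hθ
        simp only [Finset.coe_filter, Set.mem_setOf_eq, Finset.mem_filter, Finset.mem_univ, true_and] at hθ ⊢
        rw [AddChar.mul_apply, AddChar.inv_apply', hθt, hθ, inv_mul_cancel₀ htne]
      · intro θ hθ
        simp only [Finset.coe_filter, Set.mem_setOf_eq, Finset.mem_filter, Finset.mem_univ, true_and] at hθ ⊢
        rw [AddChar.mul_apply, hθt, hθ, mul_one]
      · intro θ _; dsimp only; rw [← mul_assoc, mul_inv_cancel, one_mul]
      · intro θ _; dsimp only; rw [← mul_assoc, inv_mul_cancel, one_mul]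
    have h3 := card_eval_one q
    rw [Nat.card_eq_fintype_card] at h3
    rw [this, ← h3]
    exact (Fintype.card_subtype _).symm
  -- total count
  have htotal : Fintype.card (AddChar G ℂ) = T.card * (Nat.card G / n) := by
    have h4 := Finset.card_eq_sum_card_fiberwise
      (f := fun θ : AddChar G ℂ => θ q) (s := Finset.univ) (t := T)
      (fun θ _ => Finset.mem_image_of_mem _ (Finset.mem_univ θ))
    rw [Finset.card_univ] at h4
    rw [h4, Finset.sum_congr rfl hfiber, Finset.sum_const, smul_eq_mul]
  have hdvd : n ∣ Nat.card G := by
    rw [hn, ← Nat.card_zmultiples]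
    exact Dvd.intro _ (AddSubgroup.card_mul_index (AddSubgroup.zmultiples q))
  have hGpos : 0 < Nat.card G := Nat.card_pos
  have hTcard : T.card = n := by
    rw [AddChar.card_eq, ← Nat.card_eq_fintype_card] at htotal
    obtain ⟨m, hm⟩ := hdvd
    have hmpos : 0 < m := by
      rcases Nat.eq_zero_or_pos m with h | h
      · subst h; rw [mul_zero] at hm; omega
      · exact h
    rw [hm, Nat.mul_div_cancel_left _ hnpos] at htotal
    exact Nat.eq_of_mul_eq_mul_right hmpos htotal.symm
  -- T equals the set of n-th roots of unity
  have hsub : T ⊆ Polynomial.nthRootsFinset n (1 : ℂ) := by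
    intro t ht
    obtain ⟨θ, -, hθ⟩ := Finset.mem_image.mp ht
    exact (Polynomial.mem_nthRootsFinset hnpos 1).mpr (hθ ▸ hroot θ)
  have hcardroots : (Polynomial.nthRootsFinset n (1 : ℂ)).card = n :=
    (Complex.isPrimitiveRoot_exp n hnpos.ne').card_nthRootsFinset
  have hTeq : T = Polynomial.nthRootsFinset n (1 : ℂ) :=
    Finset.eq_of_subset_of_card_le hsub (by rw [hcardroots, hTcard])
  have hcT : c ∈ T := hTeq ▸ (Polynomial.mem_nthRootsFinset hnpos 1).mpr hc
  obtain ⟨θ, -, hθ⟩ := Finset.mem_image.mp hcT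
  exact ⟨θ, hθ⟩

private lemma card_eval_eq {G : Type*} [AddCommGroup G] [Finite G] (q : G) {c : ℂ}
    (hc : c ^ addOrderOf q = 1) :
    Nat.card {θ : AddChar G ℂ // θ q = c} = Nat.card G / addOrderOf q := by
  obtain ⟨θ₁, hθ₁⟩ := exists_eval_eq q hc
  have hcne : c ≠ 0 := hθ₁ ▸ (θ₁.val_isUnit q).ne_zero
  rw [← card_eval_one q]
  apply Nat.card_congr
  refine ⟨fun θ => ⟨θ₁⁻¹ * θ.1, ?_⟩, fun θ => ⟨θ₁ * θ.1, ?_⟩, ?_, ?_⟩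
  · rw [AddChar.mul_apply, AddChar.inv_apply', hθ₁, θ.2, inv_mul_cancel₀ hcne]
  · rw [AddChar.mul_apply, hθ₁, θ.2, mul_one]
  · intro θ; ext1; simp [← mul_assoc]
  · intro θ; ext1; simp [← mul_assoc]

private lemma card_eval_ne {G : Type*} [AddCommGroup G] [Finite G] (q : G) {c : ℂ}
    (hc : c ^ addOrderOf q ≠ 1) :
    Nat.card {θ : AddChar G ℂ // θ q = c} = 0 := by
  have : IsEmpty {θ : AddChar G ℂ // θ q = c} := by
    refine ⟨fun θ => hc ?_⟩
    rw [← θ.2, ← AddChar.map_nsmul_eq_pow, addOrderOf_nsmul_eq_zero,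
      AddChar.map_zero_eq_one]
  exact Nat.card_of_isEmpty

private lemma res_surj {G : Type*} [AddCommGroup G] [Finite G] (N : AddSubgroup G)
    (χ : AddChar N ℂ) : ∃ ψ : AddChar G ℂ, ∀ x : N, ψ x = χ x := by
  classical
  let R : AddChar G ℂ →* AddChar N ℂ := MonoidHom.mk'
    (fun ψ => ψ.compAddMonoidHom N.subtype) (fun a b => rfl)
  have hker : Nat.card R.ker = N.index := by
    rw [← card_annih N]
    apply Nat.card_congr (Equiv.subtypeEquivRight _)
    intro ψ
    constructor
    · intro h x; exact DFunLike.congr_fun h x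
    · intro h; ext x; exact h x
  have hrange : Nat.card R.range = Nat.card (AddChar N ℂ) := by
    have h1 : Nat.card R.ker * R.ker.index = Nat.card (AddChar G ℂ) :=
      Subgroup.card_mul_index _
    have h2 : Nat.card R.range = R.ker.index :=
      (Nat.card_congr (QuotientGroup.quotientKerEquivRange R).toEquiv).symm
    have h3 : Nat.card N * N.index = Nat.card G := AddSubgroup.card_mul_index _
    have h4 : N.index ≠ 0 := AddSubgroup.index_ne_zero_of_finite
    rw [natcard_addChar]
    rw [hker, natcard_addChar] at h1
    have : Nat.card R.range * N.index = Nat.card N * N.index := by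
      rw [h3, ← h1, h2]; ring
    exact Nat.eq_of_mul_eq_mul_right (Nat.pos_of_ne_zero h4) this
  have htop : R.range = ⊤ := Subgroup.eq_top_of_card_eq _ hrange
  have hχ : χ ∈ R.range := htop ▸ Subgroup.mem_top χ
  obtain ⟨ψ, hψ⟩ := hχ
  exact ⟨ψ, fun x => DFunLike.congr_fun hψ x⟩

theorem stmt_5 (A : Type*) [AddCommGroup A] [Fintype A]
    (H : AddSubgroup A) (χ : AddChar H ℂ) (u : A)
    (k k₀ : ℕ) (hk_pos : 0 < k)
    (hk_mem : k • u ∈ H) (hk_one : χ ⟨k • u, hk_mem⟩ = 1)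
    (hk_min : ∀ l : ℕ, 0 < l → ∀ hl : l • u ∈ H, χ ⟨l • u, hl⟩ = 1 → k ≤ l)
    (hk₀_pos : 0 < k₀) (hk₀_mem : k₀ • u ∈ H)
    (hk₀_min : ∀ l : ℕ, 0 < l → l • u ∈ H → k₀ ≤ l) :
    (Nat.card {ψ : AddChar A ℂ // (∀ x : H, ψ x = χ x) ∧ ψ u ≠ 1} : ℚ) =
      if k₀ = k then (H.index : ℚ) * ((k : ℚ) - 1) / (k : ℚ)
      else (H.index : ℚ) := by
  classical
  obtain ⟨ψ₀, hψ₀⟩ := res_surj H χ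
  set q : A ⧸ H := QuotientAddGroup.mk u with hqdef
  have hmemiff : ∀ l : ℕ, (l • u ∈ H ↔ l • q = 0) := by
    intro l
    rw [hqdef, ← QuotientAddGroup.mk_nsmul, QuotientAddGroup.eq_zero_iff]
  have hq : addOrderOf q = k₀ := by
    have h1 : addOrderOf q ∣ k₀ := addOrderOf_dvd_of_nsmul_eq_zero ((hmemiff k₀).mp hk₀_mem)
    have hpos : 0 < addOrderOf q := addOrderOf_pos q
    have h2 : k₀ ≤ addOrderOf q :=
      hk₀_min _ hpos ((hmemiff _).mpr (addOrderOf_nsmul_eq_zero q))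
    have h3 : addOrderOf q ≤ k₀ := Nat.le_of_dvd hk₀_pos h1
    omega
  set v : ℂ := ψ₀ u with hv
  have hvne : v ≠ 0 := (ψ₀.val_isUnit u).ne_zero
  set F : AddChar (A ⧸ H) ℂ → AddChar A ℂ :=
    fun θ => ψ₀ * θ.compAddMonoidHom (QuotientAddGroup.mk' H) with hFdef
  have hF1 : ∀ θ (x : H), (F θ) x = χ x := by
    intro θ x
    rw [hFdef]
    simp only [AddChar.mul_apply, AddChar.compAddMonoidHom_apply, QuotientAddGroup.mk'_apply,
      (QuotientAddGroup.eq_zero_iff _).mpr x.2, AddChar.map_zero_eq_one, mul_one]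
    exact hψ₀ x
  have hFu : ∀ θ, (F θ) u = v * θ q := fun θ => rfl
  have hiff : ∀ t : ℂ, (v * t = 1 ↔ t = v⁻¹) := by
    intro t
    constructor
    · intro h; exact (inv_eq_of_mul_eq_one_right h).symm
    · rintro rfl; exact mul_inv_cancel₀ hvne
  have hcard : Nat.card {ψ : AddChar A ℂ // (∀ x : H, ψ x = χ x) ∧ ψ u ≠ 1}
      = Nat.card {θ : AddChar (A ⧸ H) ℂ // θ q ≠ v⁻¹} := by
    apply Nat.card_congr
    refine (Equiv.ofBijective
      (fun θ : {θ : AddChar (A ⧸ H) ℂ // θ q ≠ v⁻¹} =>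
        (⟨F θ.1, hF1 θ.1, by rw [hFu]; exact fun h => θ.2 ((hiff _).mp h)⟩ :
          {ψ : AddChar A ℂ // (∀ x : H, ψ x = χ x) ∧ ψ u ≠ 1})) ⟨?_, ?_⟩).symm
    · intro a b hab
      have h1 : F a.1 = F b.1 := congrArg Subtype.val hab
      rw [hFdef] at h1
      exact Subtype.ext (AddChar.compAddMonoidHom_injective_left _
        (QuotientAddGroup.mk'_surjective H) (mul_left_cancel h1))
    · rintro ⟨ψ, hres, hne⟩
      have hφ : ∀ x : H, (ψ₀⁻¹ * ψ) x = 1 := by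
        intro x
        rw [AddChar.mul_apply, AddChar.inv_apply', hψ₀ x, hres x,
          inv_mul_cancel₀ ((χ.val_isUnit x).ne_zero)]
      obtain ⟨θ, hθ⟩ := (annih_bij H).2 ⟨ψ₀⁻¹ * ψ, hφ⟩
      have hθ' : θ.compAddMonoidHom (QuotientAddGroup.mk' H) = ψ₀⁻¹ * ψ :=
        congrArg Subtype.val hθ
      have hFθ : F θ = ψ := by rw [hFdef]; dsimp only; rw [hθ', mul_inv_cancel_left]
      refine ⟨⟨θ, fun hcontra => ?_⟩, Subtype.ext hFθ⟩
      apply hne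
      rw [← hFθ, hFu θ, hcontra, mul_inv_cancel₀ hvne]
  have hcompl : Nat.card {θ : AddChar (A ⧸ H) ℂ // θ q ≠ v⁻¹}
      = H.index - Nat.card {θ : AddChar (A ⧸ H) ℂ // θ q = v⁻¹} := by
    rw [Nat.card_eq_fintype_card, Nat.card_eq_fintype_card,
      Fintype.card_subtype_compl (p := fun θ : AddChar (A ⧸ H) ℂ => θ q = v⁻¹)]
    congr 1
    rw [← Nat.card_eq_fintype_card, natcard_addChar, AddSubgroup.index_eq_card]
  by_cases hcase : k₀ = k
  · rw [if_pos hcase]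
    have hvk : v ^ k = 1 := by
      have h1 := hψ₀ ⟨k • u, hk_mem⟩
      rw [hk_one] at h1
      rw [hv, ← AddChar.map_nsmul_eq_pow]
      exact h1
    have hc : v⁻¹ ^ addOrderOf q = 1 := by rw [hq, hcase, inv_pow, hvk, inv_one]
    have hM := card_eval_eq q hc
    rw [hq, hcase] at hM
    have hdvd : k ∣ H.index := by
      have h1 : addOrderOf q ∣ Nat.card (A ⧸ H) := by
        rw [← Nat.card_zmultiples]
        exact Dvd.intro _ (AddSubgroup.card_mul_index (AddSubgroup.zmultiples q))
      rw [hq, hcase] at h1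
      rw [AddSubgroup.index_eq_card]
      exact h1
    obtain ⟨m, hm⟩ := hdvd
    have hQcard : Nat.card (A ⧸ H) = H.index := (AddSubgroup.index_eq_card H).symm
    rw [hQcard] at hM
    rw [hcard, hcompl, hM, hm, Nat.mul_div_cancel_left _ hk_pos]
    have hle : m ≤ k * m := Nat.le_mul_of_pos_left m hk_pos
    push_cast [hle]
    field_simp
  · rw [if_neg hcase]
    have hc : v⁻¹ ^ addOrderOf q ≠ 1 := by
      rw [hq, inv_pow]
      intro h1
      have h2 : v ^ k₀ = 1 := by rwa [inv_eq_one] at h1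
      have h3 : χ ⟨k₀ • u, hk₀_mem⟩ = 1 := by
        rw [← hψ₀ ⟨k₀ • u, hk₀_mem⟩]
        show ψ₀ (k₀ • u) = 1
        rw [AddChar.map_nsmul_eq_pow, ← hv, h2]
      exact hcase (le_antisymm (hk₀_min k hk_pos hk_mem) (hk_min k₀ hk₀_pos hk₀_mem h3))
    rw [hcard, hcompl, card_eval_ne q hc, Nat.sub_zero]
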